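/- There exists a constant C > 0 such that for every integer n ≥ 3, the positive co-degree Turán number of K₂,₂,₂ satisfies co⁺ex(n, K₂,₂,₂) ≤ C·n^{5/6}. -/

import Mathlib

open Finset

/-- The co-degree of a vertex set `S` in the hypergraph with edge set `E`:
the number of edges containing `S`. -/
def coDeg {n : ℕ} (E : Finset (Finset (Fin n))) (S : Finset (Fin n)) : ℕ :=
  (E.filter (fun e => S ⊆ e)).card

/-- The minimum positive co-degree `δ⁺_{r-1}` of an `r`-graph on `Fin n` with edge set `E`:
the largest `k` such that every `(r-1)`-set of vertices contained in at least one edge is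
contained in at least `k` edges (i.e. the minimum of the positive co-degrees). -/
noncomputable def minPosCoDeg (r n : ℕ) (E : Finset (Finset (Fin n))) : ℕ :=
  sInf {d : ℕ | ∃ S : Finset (Fin n), S.card = r - 1 ∧ coDeg E S = d ∧ 0 < d}

/-- `E` contains a copy of `F`: an injection of the vertices of `F` mapping
edges of `F` to edges of `E`. -/
def Contains {α β : Type*} [DecidableEq α] [DecidableEq β]
    (F : Finset (Finset α)) (E : Finset (Finset β)) : Prop :=
  ∃ f : α → β, Function.Injective f ∧ ∀ e ∈ F, e.image f ∈ E

/-- The positive co-degree Turán number `co⁺ex_r(n, F)`: the maximum of the minimum positive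
co-degree over all `F`-free `r`-graphs on `n` vertices with at least one edge. -/
noncomputable def coPlusEx {α : Type*} [DecidableEq α] (r n : ℕ) (F : Finset (Finset α)) : ℕ :=
  sSup {d : ℕ | ∃ E : Finset (Finset (Fin n)),
    (∀ e ∈ E, e.card = r) ∧ E.Nonempty ∧ ¬ Contains F E ∧ minPosCoDeg r n E = d}


def K4minus : Finset (Finset (Fin 4)) := {{0,1,2}, {0,1,3}, {0,2,3}}

def K4 : Finset (Finset (Fin 4)) := {{0,1,2}, {0,1,3}, {0,2,3}, {1,2,3}}

def F5 : Finset (Finset (Fin 5)) := {{0,1,2}, {0,1,3}, {2,3,4}}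

def F32 : Finset (Finset (Fin 5)) := {{0,1,2}, {0,3,4}, {1,3,4}, {2,3,4}}

def Fano : Finset (Finset (Fin 7)) :=
  {{0,1,2}, {2,3,4}, {0,4,5}, {1,3,5}, {0,3,6}, {1,4,6}, {2,5,6}}

def F33 : Finset (Finset (Fin 6)) :=
  {{0,1,2}, {0,3,4}, {0,3,5}, {0,4,5}, {1,3,4}, {1,3,5}, {1,4,5}, {2,3,4}, {2,3,5}, {2,4,5}}

def C5 : Finset (Finset (Fin 5)) := {{0,1,2}, {1,2,3}, {2,3,4}, {0,3,4}, {0,1,4}}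

def C5minus : Finset (Finset (Fin 5)) := {{0,1,2}, {1,2,3}, {2,3,4}, {0,3,4}}

def K222 : Finset (Finset (Fin 6)) :=
  {{0,2,4}, {0,2,5}, {0,3,4}, {0,3,5}, {1,2,4}, {1,2,5}, {1,3,4}, {1,3,5}}

/-- `J k`: the 3-graph on `k+1` vertices whose edges are all triples containing the
distinguished vertex `0`. -/
def Jgraph (k : ℕ) : Finset (Finset (Fin (k+1))) :=
  (Finset.univ.powersetCard 3).filter (fun e => (0 : Fin (k+1)) ∈ e)

/-- `E` is (isomorphic to) the complete balanced `k`-partite 3-graph on `n` vertices: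
there is a partition of the vertices into `k` classes whose sizes differ by at most one,
such that the edges are exactly the triples of vertices in three pairwise distinct classes. -/
def IsCompleteBalancedMultipartite (n k : ℕ) (E : Finset (Finset (Fin n))) : Prop :=
  ∃ f : Fin n → Fin k,
    (∀ i j : Fin k, (Finset.univ.filter (fun v => f v = i)).card ≤
      (Finset.univ.filter (fun v => f v = j)).card + 1) ∧
    ∀ e : Finset (Fin n), e ∈ E ↔ (e.card = 3 ∧ (e.image f).card = 3)

/-- The unique (6,3,2)-design `H₆`. -/
def H6 : Finset (Finset (Fin 6)) :=
  {{0,1,2}, {0,1,3}, {2,3,4}, {2,3,5}, {0,4,5}, {1,4,5}, {0,2,4}, {0,3,5}, {1,2,5}, {1,3,4}}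

/-- `E` is (isomorphic to) a balanced blow-up of `H₆` on `n` vertices: the vertices are
partitioned into six classes of equal size, and the edges are exactly the triples whose
three vertices lie in classes forming an edge of `H₆`. -/
def IsBalancedH6Blowup (n : ℕ) (E : Finset (Finset (Fin n))) : Prop :=
  ∃ f : Fin n → Fin 6,
    (∀ i j : Fin 6, (Finset.univ.filter (fun v => f v = i)).card =
      (Finset.univ.filter (fun v => f v = j)).card) ∧
    ∀ e : Finset (Fin n), e ∈ E ↔ (e.card = 3 ∧ e.image f ∈ H6)

namespace K222Aux
variable {n : ℕ}

def xE (E : Finset (Finset (Fin n))) (a b c : Fin n) : ℕ :=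
  if ({a, b, c} : Finset (Fin n)) ∈ E then 1 else 0

def dB (E : Finset (Finset (Fin n))) (a b : Fin n) : ℕ := ∑ c, xE E a b c

def WW (E : Finset (Finset (Fin n))) (a c c' : Fin n) : ℕ :=
  ∑ b, xE E a b c * xE E a b c'

def innQ (E : Finset (Finset (Fin n))) (a c c' : Fin n) : ℕ :=
  ∑ b, ∑ b', (if b ≠ b' then (xE E a b c * xE E a b c') * (xE E a b' c * xE E a b' c') else 0)

def Qa (E : Finset (Finset (Fin n))) (a : Fin n) : ℕ :=
  ∑ c, ∑ c', (if c ≠ c' then innQ E a c c' else 0)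

def supp (E : Finset (Finset (Fin n))) : Finset (Fin n) := E.biUnion id

lemma mem_supp {E : Finset (Finset (Fin n))} {v : Fin n} :
    v ∈ supp E ↔ ∃ e ∈ E, v ∈ e := by simp [supp]

lemma xE_le_one (E : Finset (Finset (Fin n))) (a b c : Fin n) : xE E a b c ≤ 1 := by
  unfold xE; split <;> simp

lemma xE_ne_zero {E : Finset (Finset (Fin n))} {a b c : Fin n} (h : xE E a b c ≠ 0) :
    ({a, b, c} : Finset (Fin n)) ∈ E := by
  unfold xE at h; split at h; · assumption
  · simp at h

lemma xE_of_mem {E : Finset (Finset (Fin n))} {a b c : Fin n}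
    (h : ({a, b, c} : Finset (Fin n)) ∈ E) : xE E a b c = 1 := by
  unfold xE; simp [h]

lemma supp_of_mem {E : Finset (Finset (Fin n))} {a b c : Fin n}
    (h : ({a, b, c} : Finset (Fin n)) ∈ E) :
    a ∈ supp E ∧ b ∈ supp E ∧ c ∈ supp E := by
  refine ⟨mem_supp.2 ⟨_, h, ?_⟩, mem_supp.2 ⟨_, h, ?_⟩, mem_supp.2 ⟨_, h, ?_⟩⟩ <;> simp

lemma trip_swap23 (a b c : Fin n) : ({a, b, c} : Finset (Fin n)) = {a, c, b} := by
  rw [Finset.pair_comm b c]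

lemma trip_distinct {E : Finset (Finset (Fin n))} (h3 : ∀ e ∈ E, e.card = 3)
    {a b c : Fin n} (h : ({a, b, c} : Finset (Fin n)) ∈ E) :
    a ≠ b ∧ a ≠ c ∧ b ≠ c := by
  have hc := h3 _ h
  refine ⟨?_, ?_, ?_⟩ <;> rintro rfl
  · rw [Finset.insert_idem] at hc
    have := Finset.card_insert_le a ({c} : Finset (Fin n)); simp at this; omega
  · rw [Finset.pair_comm b a, Finset.insert_idem] at hc
    have := Finset.card_insert_le a ({b} : Finset (Fin n)); simp at this; omega
  · have : ({b} : Finset (Fin n)) = insert b {b} := by simp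
    rw [← this] at hc
    have := Finset.card_insert_le a ({b} : Finset (Fin n)); simp at this; omega

lemma exists_third {E : Finset (Finset (Fin n))} (h3 : ∀ e ∈ E, e.card = 3)
    {e : Finset (Fin n)} (he : e ∈ E) {a : Fin n} (ha : a ∈ e) :
    ∃ b c : Fin n, e = {a, b, c} := by
  have hc := h3 e he
  rw [Finset.card_eq_three] at hc
  obtain ⟨x, y, z, hxy, hxz, hyz, rfl⟩ := hc
  simp only [Finset.mem_insert, Finset.mem_singleton] at ha
  rcases ha with rfl | rfl | rfl
  · exact ⟨y, z, rfl⟩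
  · exact ⟨x, z, by ext t; simp; tauto⟩
  · exact ⟨x, y, by ext t; simp; tauto⟩

lemma sum_le_supp_mul {E : Finset (Finset (Fin n))} {f : Fin n → ℕ} {m : ℕ}
    (h0 : ∀ v, f v ≠ 0 → v ∈ supp E) (h1 : ∀ v, f v ≤ m) :
    ∑ v, f v ≤ (supp E).card * m := by
  have hs : ∑ v ∈ supp E, f v = ∑ v, f v :=
    Finset.sum_subset (subset_univ (supp E))
      (fun x _ hx => by by_contra h; exact hx (h0 x h))
  rw [← hs]
  calc ∑ v ∈ supp E, f v ≤ ∑ _v ∈ supp E, m := sum_le_sum fun v _ => h1 v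
    _ = (supp E).card * m := by rw [sum_const, smul_eq_mul]

lemma xE_idem (E : Finset (Finset (Fin n))) (a b c : Fin n) :
    xE E a b c * xE E a b c = xE E a b c := by unfold xE; split <;> simp

-- W^2 = innQ + W
lemma sq_WW (E : Finset (Finset (Fin n))) (a c c' : Fin n) :
    WW E a c c' ^ 2 = innQ E a c c' + WW E a c c' := by
  have hy : ∀ b, (xE E a b c * xE E a b c') * (xE E a b c * xE E a b c') =
      xE E a b c * xE E a b c' := by
    intro b
    have h1 := xE_idem E a b c
    have h2 := xE_idem E a b c'
    calc (xE E a b c * xE E a b c') * (xE E a b c * xE E a b c')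
        = (xE E a b c * xE E a b c) * (xE E a b c' * xE E a b c') := by ring
      _ = xE E a b c * xE E a b c' := by rw [h1, h2]
  calc WW E a c c' ^ 2
      = ∑ b, ∑ b', (xE E a b c * xE E a b c') * (xE E a b' c * xE E a b' c') := by
        rw [sq, WW, Finset.sum_mul_sum]
    _ = ∑ b, ∑ b', ((if b ≠ b' then (xE E a b c * xE E a b c') * (xE E a b' c * xE E a b' c') else 0)
          + (if b = b' then (xE E a b c * xE E a b c') * (xE E a b' c * xE E a b' c') else 0)) := by
        refine Finset.sum_congr rfl fun b _ => Finset.sum_congr rfl fun b' _ => ?_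
        by_cases h : b = b' <;> simp [h]
    _ = innQ E a c c' + ∑ b, ∑ b', (if b = b' then (xE E a b c * xE E a b c') * (xE E a b' c * xE E a b' c') else 0) := by
        simp only [Finset.sum_add_distrib]
        rfl
    _ = innQ E a c c' + WW E a c c' := by
        congr 1
        rw [WW]
        refine Finset.sum_congr rfl fun b _ => ?_
        rw [Finset.sum_ite_eq univ b (fun b' => (xE E a b c * xE E a b c') * (xE E a b' c * xE E a b' c'))]
        simp [hy b]



lemma xE_prod_le_one (E : Finset (Finset (Fin n))) (a b c c' : Fin n) :
    xE E a b c * xE E a b c' ≤ 1 :=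
  (Nat.mul_le_mul (xE_le_one E a b c) (xE_le_one E a b c')).trans (by norm_num)

lemma WW_le_supp (E : Finset (Finset (Fin n))) (a c c' : Fin n) :
    WW E a c c' ≤ (supp E).card := by
  have h := sum_le_supp_mul (E := E) (f := fun b => xE E a b c * xE E a b c') (m := 1)
    (fun b hb => by
      have h1 : xE E a b c ≠ 0 := fun h => hb (by show xE E a b c * xE E a b c' = 0; rw [h, zero_mul])
      exact (supp_of_mem (xE_ne_zero h1)).2.1)
    (fun b => xE_prod_le_one E a b c c')
  simpa [WW] using h

lemma apex_bound {E : Finset (Finset (Fin n))} {d : ℕ} (h3 : ∀ e ∈ E, e.card = 3)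
    (hd : ∀ a b c : Fin n, ({a, b, c} : Finset (Fin n)) ∈ E → d ≤ dB E a b)
    {a : Fin n} (ha : a ∈ supp E) :
    d ^ 6 ≤ (supp E).card ^ 2 * Qa E a + 2 * (supp E).card ^ 5 := by
  set s := (supp E).card with hs
  have hdBnz : ∀ b, dB E a b ≠ 0 → ∃ c, ({a, b, c} : Finset (Fin n)) ∈ E := by
    intro b hb
    rw [dB] at hb
    obtain ⟨c, _, hc⟩ := Finset.exists_ne_zero_of_sum_ne_zero hb
    exact ⟨c, xE_ne_zero hc⟩
  have hdB_supp : ∀ b, dB E a b ≠ 0 → b ∈ supp E := fun b hb => by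
    obtain ⟨c, hc⟩ := hdBnz b hb; exact (supp_of_mem hc).2.1
  have hdB_le : ∀ b, dB E a b ≤ s := by
    intro b
    have h := sum_le_supp_mul (E := E) (f := fun c => xE E a b c) (m := 1)
      (fun c hc => (supp_of_mem (xE_ne_zero hc)).2.2) (fun c => xE_le_one E a b c)
    simpa [dB] using h
  have hd_dB : ∀ b, dB E a b ≠ 0 → d ≤ dB E a b := by
    intro b hb; obtain ⟨c, hc⟩ := hdBnz b hb; exact hd a b c hc
  obtain ⟨e, he, hae⟩ := mem_supp.1 ha
  obtain ⟨b₀, c₀, rfl⟩ := exists_third h3 he hae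
  have hm0 : ({a, b₀, c₀} : Finset (Fin n)) ∈ E := he
  set B : Finset (Fin n) := univ.filter (fun b => dB E a b ≠ 0) with hB
  have hdle : d ≤ B.card := by
    have hC0 : (univ.filter (fun c => ({a, b₀, c} : Finset (Fin n)) ∈ E)) ⊆ B := by
      intro c hc
      simp only [hB, mem_filter, mem_univ, true_and] at hc ⊢
      have h2 : ({a, c, b₀} : Finset (Fin n)) ∈ E := by rw [trip_swap23]; exact hc
      intro h0
      rw [dB] at h0
      have h4 := Finset.sum_eq_zero_iff.1 h0 b₀ (mem_univ _)
      rw [xE_of_mem h2] at h4; omega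
    have hcard : d ≤ (univ.filter (fun c => ({a, b₀, c} : Finset (Fin n)) ∈ E)).card := by
      have heq : (univ.filter (fun c => ({a, b₀, c} : Finset (Fin n)) ∈ E)).card = dB E a b₀ := by
        rw [dB, Finset.card_filter]; rfl
      rw [heq]; exact hd a b₀ c₀ hm0
    exact hcard.trans (card_le_card hC0)
  have hS1 : d * d ≤ ∑ b, dB E a b := by
    calc d * d ≤ B.card * d := Nat.mul_le_mul_right d hdle
      _ ≤ ∑ b ∈ B, dB E a b := by
          have h := Finset.card_nsmul_le_sum B (fun b => dB E a b) d
            (fun b hb => hd_dB b (by simpa [hB] using hb))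
          simpa using h
      _ ≤ ∑ b, dB E a b := Finset.sum_le_sum_of_subset (subset_univ B)
  have hS2 : d ^ 3 ≤ ∑ b, dB E a b ^ 2 := by
    calc d ^ 3 = d * (d * d) := by ring
      _ ≤ d * ∑ b, dB E a b := Nat.mul_le_mul_left d hS1
      _ = ∑ b, d * dB E a b := Finset.mul_sum _ _ _
      _ ≤ ∑ b, dB E a b ^ 2 := by
          refine sum_le_sum fun b _ => ?_
          rcases Nat.eq_zero_or_pos (dB E a b) with h | h
          · simp [h]
          · rw [sq]; exact mul_le_mul_left (hd_dB b (by omega)) _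
  have hI1 : ∑ c, ∑ c', WW E a c c' = ∑ b, dB E a b ^ 2 := by
    have h1 : ∀ c : Fin n, ∑ c', ∑ b, xE E a b c * xE E a b c'
        = ∑ b, ∑ c', xE E a b c * xE E a b c' := fun c => Finset.sum_comm
    calc ∑ c, ∑ c', WW E a c c'
        = ∑ b, ∑ c, ∑ c', xE E a b c * xE E a b c' := by
          simp only [WW, h1]; exact Finset.sum_comm
      _ = ∑ b, dB E a b ^ 2 := by
          refine sum_congr rfl fun b _ => ?_
          rw [sq, dB, Finset.sum_mul_sum]
  have hWW_supp : ∀ p : Fin n × Fin n, WW E a p.1 p.2 ≠ 0 → p ∈ (supp E) ×ˢ (supp E) := by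
    intro p hp
    rw [WW] at hp
    obtain ⟨b, _, hb⟩ := Finset.exists_ne_zero_of_sum_ne_zero hp
    have h1 : xE E a b p.1 ≠ 0 := fun h => hb (by rw [h, zero_mul])
    have h2 : xE E a b p.2 ≠ 0 := fun h => hb (by rw [h, mul_zero])
    exact Finset.mem_product.2
      ⟨(supp_of_mem (xE_ne_zero h1)).2.2, (supp_of_mem (xE_ne_zero h2)).2.2⟩
  have hrestrict : ∑ p ∈ (supp E) ×ˢ (supp E), WW E a p.1 p.2
      = ∑ p : Fin n × Fin n, WW E a p.1 p.2 :=
    Finset.sum_subset (Finset.subset_univ _)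
      (fun x _ hx => by by_contra h; exact hx (hWW_supp x h))
  have hPT : ∑ p : Fin n × Fin n, WW E a p.1 p.2 = ∑ c, ∑ c', WW E a c c' :=
    Fintype.sum_prod_type (fun p => WW E a p.1 p.2)
  have hCS : (∑ p ∈ (supp E) ×ˢ (supp E), WW E a p.1 p.2) ^ 2
      ≤ ((supp E) ×ˢ (supp E)).card * ∑ p ∈ (supp E) ×ˢ (supp E), WW E a p.1 p.2 ^ 2 := by
    exact_mod_cast sq_sum_le_card_mul_sum_sq (s := (supp E) ×ˢ (supp E))
      (f := fun p => (WW E a p.1 p.2 : ℤ))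
  have hsq_restrict : ∑ p ∈ (supp E) ×ˢ (supp E), WW E a p.1 p.2 ^ 2
      ≤ ∑ p : Fin n × Fin n, WW E a p.1 p.2 ^ 2 :=
    Finset.sum_le_sum_of_subset (subset_univ _)
  have hsplitsum : ∑ p : Fin n × Fin n, WW E a p.1 p.2 ^ 2 = ∑ c, ∑ c', WW E a c c' ^ 2 :=
    Fintype.sum_prod_type (fun p => WW E a p.1 p.2 ^ 2)
  have hS2le : ∑ b, dB E a b ^ 2 ≤ s * s ^ 2 :=
    sum_le_supp_mul (fun b hb => hdB_supp b (fun h => hb (by rw [h]; rfl)))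
      (fun b => Nat.pow_le_pow_left (hdB_le b) 2)
  have hdiag : ∑ c, WW E a c c ^ 2 ≤ s * s ^ 2 :=
    sum_le_supp_mul
      (fun c hc => (Finset.mem_product.1 (hWW_supp (c, c) (fun h => hc (by rw [h]; rfl)))).1)
      (fun c => Nat.pow_le_pow_left (WW_le_supp E a c c) 2)
  have hsplit : ∑ c, ∑ c', WW E a c c' ^ 2
      ≤ Qa E a + (∑ b, dB E a b ^ 2) + ∑ c, WW E a c c ^ 2 := by
    have hpt : ∀ c c' : Fin n, WW E a c c' ^ 2 ≤ (if c ≠ c' then innQ E a c c' else 0)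
        + WW E a c c' + (if c = c' then WW E a c c' ^ 2 else 0) := by
      intro c c'
      by_cases h : c = c'
      · simp only [h, ne_eq, not_true_eq_false, if_false, if_pos rfl, ite_true]
        simpa using Nat.le_add_left (WW E a c' c' ^ 2) (0 + WW E a c' c')
      · rw [sq_WW E a c c']
        simp [h]
    calc ∑ c, ∑ c', WW E a c c' ^ 2
        ≤ ∑ c, ∑ c', ((if c ≠ c' then innQ E a c c' else 0) + WW E a c c'
            + (if c = c' then WW E a c c' ^ 2 else 0)) :=
          sum_le_sum fun c _ => sum_le_sum fun c' _ => hpt c c'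
      _ = Qa E a + (∑ c, ∑ c', WW E a c c')
            + ∑ c, ∑ c', (if c = c' then WW E a c c' ^ 2 else 0) := by
          simp only [Finset.sum_add_distrib]; rfl
      _ = Qa E a + (∑ b, dB E a b ^ 2) + ∑ c, WW E a c c ^ 2 := by
          rw [hI1]
          congr 1
          refine sum_congr rfl fun c _ => ?_
          rw [Finset.sum_ite_eq univ c (fun c' => WW E a c c' ^ 2)]
          simp
  have hP : ((supp E) ×ˢ (supp E)).card = s * s := by rw [card_product]
  calc d ^ 6 = (d ^ 3) ^ 2 := by ring
    _ ≤ (∑ b, dB E a b ^ 2) ^ 2 := Nat.pow_le_pow_left hS2 2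
    _ = (∑ p ∈ (supp E) ×ˢ (supp E), WW E a p.1 p.2) ^ 2 := by
        rw [hrestrict, hPT, hI1]
    _ ≤ ((supp E) ×ˢ (supp E)).card * ∑ p ∈ (supp E) ×ˢ (supp E), WW E a p.1 p.2 ^ 2 := hCS
    _ ≤ (s * s) * (Qa E a + s * s ^ 2 + s * s ^ 2) := by
        rw [hP]
        refine Nat.mul_le_mul le_rfl ?_
        refine (hsq_restrict.trans_eq hsplitsum |>.trans hsplit |>.trans ?_ : _ ≤ _)
        exact add_le_add (add_le_add le_rfl hS2le) hdiag
    _ = s ^ 2 * Qa E a + 2 * s ^ 5 := by ring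


lemma no_double_apex {E : Finset (Finset (Fin n))} (h3 : ∀ e ∈ E, e.card = 3)
    (hfree : ¬ Contains K222 E) {a a' b b' c c' : Fin n}
    (haa : a ≠ a') (hbb : b ≠ b') (hcc : c ≠ c')
    (e1 : ({a, b, c} : Finset (Fin n)) ∈ E) (e2 : ({a, b, c'} : Finset (Fin n)) ∈ E)
    (e3 : ({a, b', c} : Finset (Fin n)) ∈ E) (e4 : ({a, b', c'} : Finset (Fin n)) ∈ E)
    (e5 : ({a', b, c} : Finset (Fin n)) ∈ E) (e6 : ({a', b, c'} : Finset (Fin n)) ∈ E)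
    (e7 : ({a', b', c} : Finset (Fin n)) ∈ E) (e8 : ({a', b', c'} : Finset (Fin n)) ∈ E) :
    False := by
  obtain ⟨hab, hac, hbc⟩ := trip_distinct h3 e1
  obtain ⟨-, hac', hbc'⟩ := trip_distinct h3 e2
  obtain ⟨hab', -, hb'c⟩ := trip_distinct h3 e3
  obtain ⟨-, -, hb'c'⟩ := trip_distinct h3 e4
  obtain ⟨ha'b, ha'c, -⟩ := trip_distinct h3 e5
  obtain ⟨-, ha'c', -⟩ := trip_distinct h3 e6
  obtain ⟨ha'b', -, -⟩ := trip_distinct h3 e7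
  refine hfree ⟨fun i : Fin 6 => if i = 0 then a else if i = 1 then a' else
      if i = 2 then b else if i = 3 then b' else if i = 4 then c else c', ?_, ?_⟩
  · intro i j hij
    fin_cases i <;> fin_cases j <;> simp_all
  · intro e he
    simp only [K222, Finset.mem_insert, Finset.mem_singleton] at he
    rcases he with rfl | rfl | rfl | rfl | rfl | rfl | rfl | rfl <;>
      · simp only [Finset.image_insert, Finset.image_singleton]
        first
        | exact e1 | exact e2 | exact e3 | exact e4
        | exact e5 | exact e6 | exact e7 | exact e8

def Tup (E : Finset (Finset (Fin n))) :
    Finset (Fin n × Fin n × Fin n × Fin n × Fin n) :=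
  univ.filter (fun t => t.2.1 ≠ t.2.2.1 ∧ t.2.2.2.1 ≠ t.2.2.2.2 ∧
    ({t.1, t.2.2.2.1, t.2.1} : Finset (Fin n)) ∈ E ∧
    ({t.1, t.2.2.2.1, t.2.2.1} : Finset (Fin n)) ∈ E ∧
    ({t.1, t.2.2.2.2, t.2.1} : Finset (Fin n)) ∈ E ∧
    ({t.1, t.2.2.2.2, t.2.2.1} : Finset (Fin n)) ∈ E)

lemma point_ind (E : Finset (Finset (Fin n))) (a c c' b b' : Fin n) :
    (if c ≠ c' then (if b ≠ b' then (xE E a b c * xE E a b c') * (xE E a b' c * xE E a b' c') else 0) else 0)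
      = if (c ≠ c' ∧ b ≠ b' ∧ ({a, b, c} : Finset (Fin n)) ∈ E ∧ ({a, b, c'} : Finset (Fin n)) ∈ E
          ∧ ({a, b', c} : Finset (Fin n)) ∈ E ∧ ({a, b', c'} : Finset (Fin n)) ∈ E) then 1 else 0 := by
  unfold xE
  split_ifs <;> simp_all

lemma count_eq (E : Finset (Finset (Fin n))) : ∑ a, Qa E a = (Tup E).card := by
  rw [Tup, Finset.card_filter]
  rw [Fintype.sum_prod_type]
  refine sum_congr rfl fun a _ => ?_
  rw [Fintype.sum_prod_type]
  rw [Qa]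
  refine sum_congr rfl fun c _ => ?_
  rw [Fintype.sum_prod_type]
  have hQ : (if c ≠ c then innQ E a c c else 0) = 0 := by simp
  refine sum_congr rfl fun c' _ => ?_
  rw [Fintype.sum_prod_type]
  calc (if c ≠ c' then innQ E a c c' else 0)
      = ∑ b, ∑ b', (if c ≠ c' then
          (if b ≠ b' then (xE E a b c * xE E a b c') * (xE E a b' c * xE E a b' c') else 0) else 0) := by
        by_cases h : c = c'
        · simp [h]
        · simp only [h, ne_eq, not_false_eq_true, if_true, innQ]
      _ = ∑ b, ∑ b', (if (c ≠ c' ∧ b ≠ b' ∧ ({a, b, c} : Finset (Fin n)) ∈ E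
            ∧ ({a, b, c'} : Finset (Fin n)) ∈ E ∧ ({a, b', c} : Finset (Fin n)) ∈ E
            ∧ ({a, b', c'} : Finset (Fin n)) ∈ E) then 1 else 0) := by
        refine sum_congr rfl fun b _ => sum_congr rfl fun b' _ => point_ind E a c c' b b'

lemma Tup_card_le {E : Finset (Finset (Fin n))} (h3 : ∀ e ∈ E, e.card = 3)
    (hfree : ¬ Contains K222 E) : (Tup E).card ≤ (supp E).card ^ 4 := by
  classical
  have hmaps : ∀ t ∈ Tup E,
      t.2 ∈ (supp E) ×ˢ ((supp E) ×ˢ ((supp E) ×ˢ (supp E))) := by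
    intro t ht
    simp only [Tup, mem_filter, mem_univ, true_and] at ht
    obtain ⟨-, -, m1, m2, -, m4⟩ := ht
    have s1 := supp_of_mem m1
    have s2 := supp_of_mem m2
    have s4 := supp_of_mem m4
    exact Finset.mem_product.2 ⟨s1.2.2, Finset.mem_product.2 ⟨s2.2.2,
      Finset.mem_product.2 ⟨s1.2.1, s4.2.1⟩⟩⟩
  have hinj : Set.InjOn (fun t : Fin n × Fin n × Fin n × Fin n × Fin n => t.2) (Tup E) := by
    rintro ⟨a1, c1, c1', b1, b1'⟩ ht1 ⟨a2, c2, c2', b2, b2'⟩ ht2 heq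
    simp only [Prod.mk.injEq] at heq ⊢
    obtain ⟨rfl, rfl, rfl, rfl⟩ := heq
    refine ⟨?_, rfl, rfl, rfl, rfl⟩
    by_contra hne
    simp only [Tup, coe_filter, Set.mem_setOf_eq, mem_univ, true_and] at ht1 ht2
    obtain ⟨hcc, hbb, m1, m2, m3, m4⟩ := ht1
    obtain ⟨-, -, m5, m6, m7, m8⟩ := ht2
    exact no_double_apex h3 hfree hne hbb hcc m1 m2 m3 m4 m5 m6 m7 m8
  calc (Tup E).card ≤ ((supp E) ×ˢ ((supp E) ×ˢ ((supp E) ×ˢ (supp E)))).card :=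
        Finset.card_le_card_of_injOn _ hmaps hinj
    _ = (supp E).card ^ 4 := by
        simp only [card_product]; ring

lemma core {d : ℕ} {E : Finset (Finset (Fin n))} (h3 : ∀ e ∈ E, e.card = 3)
    (hne : E.Nonempty) (hfree : ¬ Contains K222 E)
    (hd : ∀ a b c : Fin n, ({a, b, c} : Finset (Fin n)) ∈ E → d ≤ dB E a b) :
    d ^ 6 ≤ 3 * n ^ 5 := by
  classical
  set s := (supp E).card with hs
  have hspos : 0 < s := by
    obtain ⟨e, he⟩ := hne
    have : e.Nonempty := Finset.card_pos.1 (by rw [h3 e he]; norm_num)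
    obtain ⟨v, hv⟩ := this
    exact Finset.card_pos.2 ⟨v, mem_supp.2 ⟨e, he, hv⟩⟩
  have hsn : s ≤ n := by
    calc s ≤ (univ : Finset (Fin n)).card := card_le_card (subset_univ _)
      _ = n := by simp
  have hkey : s * d ^ 6 ≤ 3 * s ^ 6 := by
    calc s * d ^ 6 = ∑ _a ∈ supp E, d ^ 6 := by rw [sum_const, smul_eq_mul]
      _ ≤ ∑ a ∈ supp E, (s ^ 2 * Qa E a + 2 * s ^ 5) :=
          sum_le_sum fun a ha => apex_bound h3 hd ha
      _ = s ^ 2 * (∑ a ∈ supp E, Qa E a) + s * (2 * s ^ 5) := by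
          rw [sum_add_distrib, ← Finset.mul_sum, sum_const, smul_eq_mul]
      _ ≤ s ^ 2 * (∑ a, Qa E a) + s * (2 * s ^ 5) := by
          exact Nat.add_le_add_right (Nat.mul_le_mul le_rfl
            (Finset.sum_le_sum_of_subset (subset_univ _))) _
      _ = s ^ 2 * (Tup E).card + s * (2 * s ^ 5) := by rw [count_eq]
      _ ≤ s ^ 2 * s ^ 4 + s * (2 * s ^ 5) := by
          exact Nat.add_le_add_right (Nat.mul_le_mul le_rfl (Tup_card_le h3 hfree)) _
      _ ≤ 3 * s ^ 6 := by nlinarith [hspos]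
  have hd6 : d ^ 6 ≤ 3 * s ^ 5 := by
    have h2 : s * d ^ 6 ≤ s * (3 * s ^ 5) := by
      calc s * d ^ 6 ≤ 3 * s ^ 6 := hkey
        _ = s * (3 * s ^ 5) := by ring
    exact Nat.le_of_mul_le_mul_left h2 hspos
  calc d ^ 6 ≤ 3 * s ^ 5 := hd6
    _ ≤ 3 * n ^ 5 := by
      exact Nat.mul_le_mul le_rfl (Nat.pow_le_pow_left hsn 5)

lemma third_of_pair {E : Finset (Finset (Fin n))} (h3 : ∀ e ∈ E, e.card = 3)
    {a b : Fin n} (hab : a ≠ b) {e : Finset (Fin n)} (heE : e ∈ E)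
    (hsub : ({a, b} : Finset (Fin n)) ⊆ e) :
    ∃ v, v ≠ a ∧ v ≠ b ∧ e = {a, b, v} := by
  obtain ⟨p, q, rfl⟩ := exists_third h3 heE (hsub (Finset.mem_insert_self a {b}))
  obtain ⟨hap, haq, hpq⟩ := trip_distinct h3 heE
  have hb : b ∈ ({a, p, q} : Finset (Fin n)) := hsub (by simp)
  simp only [Finset.mem_insert, Finset.mem_singleton] at hb
  rcases hb with rfl | rfl | rfl
  · exact absurd rfl hab
  · exact ⟨q, fun h => haq h.symm, fun h => hpq h.symm, rfl⟩
  · exact ⟨p, fun h => hap h.symm, hpq, trip_swap23 a p b⟩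

lemma coDeg_le_dB {E : Finset (Finset (Fin n))} (h3 : ∀ e ∈ E, e.card = 3)
    {a b : Fin n} (hab : a ≠ b) :
    coDeg E {a, b} ≤ dB E a b := by
  classical
  have hdBc : dB E a b = (univ.filter (fun x => ({a, b, x} : Finset (Fin n)) ∈ E)).card := by
    rw [dB, Finset.card_filter]; rfl
  rw [hdBc, coDeg]
  set g : Finset (Fin n) → Fin n := fun e =>
    if h : (e \ ({a, b} : Finset (Fin n))).Nonempty then (e \ {a, b}).min' h else a with hgdef
  have hgval : ∀ v : Fin n, v ≠ a → v ≠ b → g ({a, b, v} : Finset (Fin n)) = v := by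
    intro v hva hvb
    have hdiff : ({a, b, v} : Finset (Fin n)) \ {a, b} = {v} := by
      ext x
      simp only [Finset.mem_sdiff, Finset.mem_insert, Finset.mem_singleton]
      constructor
      · rintro ⟨h1, h2⟩; tauto
      · rintro rfl; exact ⟨by tauto, by tauto⟩
    rw [hgdef]
    simp only [hdiff]
    rw [dif_pos (Finset.singleton_nonempty v)]
    exact Finset.min'_singleton v
  apply Finset.card_le_card_of_injOn g
  · intro e he
    simp only [Finset.mem_coe, Finset.mem_filter] at he
    obtain ⟨heE, hsub⟩ := he
    obtain ⟨v, hva, hvb, rfl⟩ := third_of_pair h3 hab heE hsub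
    simp only [Finset.mem_coe, Finset.mem_filter, Finset.mem_univ, true_and]
    rw [hgval v hva hvb]
    exact heE
  · intro e1 h1 e2 h2 heq
    simp only [Finset.coe_filter, Set.mem_setOf_eq] at h1 h2
    obtain ⟨h1E, h1s⟩ := h1
    obtain ⟨h2E, h2s⟩ := h2
    obtain ⟨v1, hv1a, hv1b, rfl⟩ := third_of_pair h3 hab h1E h1s
    obtain ⟨v2, hv2a, hv2b, rfl⟩ := third_of_pair h3 hab h2E h2s
    rw [hgval v1 hv1a hv1b, hgval v2 hv2a hv2b] at heq
    rw [heq]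

end K222Aux


/-- There is a constant `C > 0` with `co⁺ex(n, K₂,₂,₂) ≤ C·n^(5/6)` for all `n ≥ 3`. -/
theorem coPlusEx_K222_upper :
    ∃ C : ℝ, 0 < C ∧ ∀ n : ℕ, 3 ≤ n →
      (coPlusEx 3 n K222 : ℝ) ≤ C * (n : ℝ) ^ ((5 : ℝ) / 6) := by
  classical
  refine ⟨2, by norm_num, ?_⟩
  intro n hn
  set S : Set ℕ := {d : ℕ | ∃ E : Finset (Finset (Fin n)),
    (∀ e ∈ E, e.card = 3) ∧ E.Nonempty ∧ ¬ Contains K222 E ∧ minPosCoDeg 3 n E = d} with hSdef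
  have hrw : coPlusEx 3 n K222 = sSup S := rfl
  have hmain : ∀ d ∈ S, d ^ 6 ≤ 3 * n ^ 5 := by
    rintro d ⟨E, h3, hne, hfree, hmin⟩
    apply K222Aux.core h3 hne hfree
    intro a b c hm
    obtain ⟨hab, hac, hbc⟩ := K222Aux.trip_distinct h3 hm
    have h1 : d ≤ coDeg E {a, b} := by
      rw [← hmin]
      apply Nat.sInf_le
      refine ⟨{a, b}, ?_, rfl, ?_⟩
      · rw [Finset.card_insert_of_notMem (by simp [hab]), Finset.card_singleton]
      · rw [coDeg]
        apply Finset.card_pos.2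
        refine ⟨{a, b, c}, Finset.mem_filter.2 ⟨hm, ?_⟩⟩
        intro x hx
        simp only [Finset.mem_insert, Finset.mem_singleton] at hx ⊢
        tauto
    exact h1.trans (K222Aux.coDeg_le_dB h3 hab)
  have hbdd : BddAbove S := by
    refine ⟨2 * n, fun d hd => ?_⟩
    have h6 := hmain d hd
    have h64 : d ^ 6 ≤ (2 * n) ^ 6 := by
      refine h6.trans ?_
      have hn1 : 1 ≤ n := by omega
      calc 3 * n ^ 5 ≤ 64 * n ^ 6 := by nlinarith [Nat.pow_le_pow_right hn1 (by norm_num : 5 ≤ 6)]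
        _ = (2 * n) ^ 6 := by ring
    exact (Nat.pow_le_pow_iff_left (n := 6) (by norm_num)).1 h64
  have hkey : (coPlusEx 3 n K222) ^ 6 ≤ 3 * n ^ 5 := by
    rcases Set.eq_empty_or_nonempty S with hS | hS
    · have h0 : sSup S = 0 := by rw [hS]; exact csSup_empty
      rw [hrw, h0]
      simp
    · have hm := Nat.sSup_mem hS hbdd
      rw [hrw]
      exact hmain _ hm
  -- real arithmetic
  have hnR : (0:ℝ) ≤ (n:ℝ) := Nat.cast_nonneg n
  have hc : ((coPlusEx 3 n K222 : ℝ)) ^ (6:ℕ) ≤ 3 * (n:ℝ) ^ (5:ℕ) := by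
    exact_mod_cast hkey
  have hpow : ((2:ℝ) * (n:ℝ) ^ ((5:ℝ)/6)) ^ (6:ℕ) = 64 * (n:ℝ) ^ (5:ℕ) := by
    rw [mul_pow]
    have h2 : ((n:ℝ) ^ ((5:ℝ)/6)) ^ (6:ℕ) = (n:ℝ) ^ (5:ℕ) := by
      rw [← Real.rpow_natCast ((n:ℝ) ^ ((5:ℝ)/6)) 6, ← Real.rpow_mul hnR]
      norm_num
    rw [h2]
    norm_num
  have hle6 : ((coPlusEx 3 n K222 : ℝ)) ^ (6:ℕ) ≤ ((2:ℝ) * (n:ℝ) ^ ((5:ℝ)/6)) ^ (6:ℕ) := by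
    rw [hpow]
    refine hc.trans ?_
    have : (0:ℝ) ≤ (n:ℝ) ^ (5:ℕ) := by positivity
    nlinarith
  have h0l : (0:ℝ) ≤ (coPlusEx 3 n K222 : ℝ) := Nat.cast_nonneg _
  have h0r : (0:ℝ) ≤ (2:ℝ) * (n:ℝ) ^ ((5:ℝ)/6) := by positivity
  exact (pow_le_pow_iff_left₀ h0l h0r (by norm_num)).1 hle6
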